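/- Let (G_n) be an FO-convergent sequence of finite graphs with a modeling limit L, and let r be an algebraic vertex of L. Then there exists a sequence (r_n) with r_n ∈ V(G_n) such that the rooted sequence (G_n, r_n) FO-converges to (L, r). -/

import Mathlib

open FirstOrder Language MeasureTheory Filter

/-- The set of solutions of a formula `φ` in `p` free variables in a graph. -/
def solSet {V : Type} (G : SimpleGraph V) {p : ℕ}
    (φ : Language.graph.Formula (Fin p)) : Set (Fin p → V) :=
  letI := G.structure
  {v | φ.Realize v}

/-- The set of solutions of a rooted formula `φ(x₁,…,x_p,y)` with the root variable `y`
interpreted as `r`. -/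
def solSetR {V : Type} (G : SimpleGraph V) {p : ℕ}
    (φ : Language.graph.Formula (Fin (p + 1))) (r : V) : Set (Fin p → V) :=
  letI := G.structure
  {v | φ.Realize (Fin.snoc v r)}

/-- The set of solutions of a one-variable formula. -/
def sol1 {V : Type} (G : SimpleGraph V) (ξ : Language.graph.Formula (Fin 1)) : Set V :=
  letI := G.structure
  {v : V | ξ.Realize (fun _ => v)}

/-- Stone pairing `⟨φ,G⟩` of a formula and a finite graph. -/
noncomputable def stoneG {V : Type} (fV : Fintype V) (G : SimpleGraph V) {p : ℕ}
    (φ : Language.graph.Formula (Fin p)) : ℝ :=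
  (Nat.card (solSet G φ) : ℝ) / (Fintype.card V : ℝ) ^ p

/-- Rooted Stone pairing `⟨φ,(G,r)⟩` of a rooted formula and a finite graph with root `r`. -/
noncomputable def stoneGR {V : Type} (fV : Fintype V) (G : SimpleGraph V) {p : ℕ}
    (φ : Language.graph.Formula (Fin (p + 1))) (r : V) : ℝ :=
  (Nat.card (solSetR G φ r) : ℝ) / (Fintype.card V : ℝ) ^ p

/-- Stone pairing `⟨φ,L⟩` of a formula and a modeling. -/
noncomputable def stoneL {W : Type} [MeasurableSpace W] (L : SimpleGraph W)
    (ν : Measure W) {p : ℕ} (φ : Language.graph.Formula (Fin p)) : ℝ :=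
  ((Measure.pi fun _ : Fin p => ν) (solSet L φ)).toReal

/-- Rooted Stone pairing `⟨φ,(L,r)⟩` of a rooted formula and a modeling with root `r`. -/
noncomputable def stoneLR {W : Type} [MeasurableSpace W] (L : SimpleGraph W)
    (ν : Measure W) {p : ℕ} (φ : Language.graph.Formula (Fin (p + 1))) (r : W) : ℝ :=
  ((Measure.pi fun _ : Fin p => ν) (solSetR L φ r)).toReal

namespace RAV
open Language BoundedFormula
open scoped ENNReal

/-- one copy of `χ` with root mapped to bound variable `l`. -/
def copyAt {q : ℕ} (χ : Language.graph.Formula (Fin (q+1))) {i : ℕ} (l : Fin i) :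
    Language.graph.BoundedFormula (Fin q) i :=
  (BoundedFormula.relabel (Fin.snoc (fun j => Sum.inl j) (Sum.inr l) : Fin (q+1) → (Fin q) ⊕ (Fin i)) χ : Language.graph.BoundedFormula (Fin q) (i + 0))

/-- the formula `x_{pr.1} ≠ x_{pr.2}` on bound variables. -/
def neFla {q i : ℕ} (pr : Fin i × Fin i) : Language.graph.BoundedFormula (Fin q) i :=
  BoundedFormula.not (Term.bdEqual (Term.var (Sum.inr pr.1)) (Term.var (Sum.inr pr.2)))

/-- `∃ at least i distinct roots y satisfying χ(x̄,y)` -/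
noncomputable def exDist {q : ℕ} (i : ℕ) (χ : Language.graph.Formula (Fin (q+1))) :
    Language.graph.Formula (Fin q) :=
  BoundedFormula.exs
    ((BoundedFormula.iInf (fun l : Fin i => copyAt χ l)) ⊓
     (BoundedFormula.iInf
        (fun pr : {pr : Fin i × Fin i // pr.1 ≠ pr.2} => neFla pr.1)))

lemma snoc_comp_snocmap {M : Type} {q i : ℕ} (w : Fin q → M) (xs : Fin i → M) (l : Fin i) :
    (Sum.elim w (xs ∘ Fin.castAdd 0) ∘ (Fin.snoc (fun j => Sum.inl j) (Sum.inr l) : Fin (q+1) → (Fin q) ⊕ (Fin i)))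
      = Fin.snoc w (xs l) := by
  funext j
  refine Fin.lastCases ?_ (fun j0 => ?_) j
  · simp only [Function.comp_apply, Fin.snoc_last]
    simp only [Sum.elim_inr, Function.comp_apply]
    congr 1
  · simp only [Function.comp_apply, Fin.snoc_castSucc, Sum.elim_inl]

lemma solSet_exDist {M : Type} (H : SimpleGraph M) {q : ℕ} (i : ℕ) (χ : Language.graph.Formula (Fin (q+1))) :
    solSet H (exDist i χ) =
      {v | ∃ f : Fin i → M, Function.Injective f ∧ ∀ l, v ∈ solSetR H χ (f l)} := by
  letI := H.structure
  ext v
  simp only [solSet, Set.mem_setOf_eq, exDist, Formula.Realize]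
  rw [show (BoundedFormula.Realize (BoundedFormula.exs _) v (default : Fin 0 → M)) ↔ _ from BoundedFormula.realize_exs (φ := _)]
  constructor
  · rintro ⟨xs, hxs⟩
    rw [BoundedFormula.realize_inf] at hxs
    obtain ⟨h1, h2⟩ := hxs
    rw [BoundedFormula.realize_iInf] at h1 h2
    refine ⟨xs, ?_, ?_⟩
    · intro a b hab
      by_contra hne
      have := h2 ⟨(a, b), hne⟩
      rw [neFla, BoundedFormula.realize_not, BoundedFormula.realize_bdEqual] at this
      exact this (by simpa using hab)
    · intro l
      have := h1 l
      rw [copyAt, BoundedFormula.realize_relabel] at this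
      rw [snoc_comp_snocmap] at this
      show Formula.Realize χ _
      rw [Formula.Realize, Subsingleton.elim (default : Fin 0 → M) (xs ∘ Fin.natAdd i)]
      exact this
  · rintro ⟨f, hinj, hf⟩
    refine ⟨f, ?_⟩
    rw [BoundedFormula.realize_inf]
    constructor
    · rw [BoundedFormula.realize_iInf]
      intro l
      rw [copyAt, BoundedFormula.realize_relabel, snoc_comp_snocmap]
      have hfl : Formula.Realize χ (Fin.snoc v (f l)) := hf l
      rw [Formula.Realize, Subsingleton.elim (default : Fin 0 → M) (f ∘ Fin.natAdd i)] at hfl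
      exact hfl
    · rw [BoundedFormula.realize_iInf]
      rintro ⟨⟨a, b⟩, hab⟩
      rw [neFla, BoundedFormula.realize_not, BoundedFormula.realize_bdEqual]
      intro h
      exact hab (hinj (by simpa using h))
lemma exists_inj_iff_card_le {M : Type} (T : Finset M) (m : ℕ) :
    (∃ f : Fin m → M, Function.Injective f ∧ ∀ l, f l ∈ T) ↔ m ≤ T.card := by
  constructor
  · rintro ⟨f, hinj, hf⟩
    calc m = (Finset.univ : Finset (Fin m)).card := by simp
    _ ≤ T.card := Finset.card_le_card_of_injOn f (fun a _ => hf a) (Function.Injective.injOn hinj)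
  · intro h
    obtain ⟨s, hsT, hs⟩ := Finset.exists_subset_card_eq h
    have e := s.equivFin
    refine ⟨fun l => (e.symm (Fin.cast hs.symm l) : M), ?_, ?_⟩
    · intro a b hab
      have : e.symm (Fin.cast hs.symm a) = e.symm (Fin.cast hs.symm b) := Subtype.ext hab
      exact Fin.ext (by simpa using congrArg Fin.val (e.symm.injective this))
    · intro l
      exact hsT (e.symm (Fin.cast hs.symm l)).2

/-- block conjunction: `ψ` on the first `a` variables, `χ` on the last `b` variables,
sharing the root (last) variable -/
def bCons {a b : ℕ} (ψ : Language.graph.Formula (Fin (a+1)))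
    (χ : Language.graph.Formula (Fin (b+1))) : Language.graph.Formula (Fin ((a+b)+1)) :=
  (Formula.relabel (Fin.snoc (fun i => (Fin.castAdd b i).castSucc) (Fin.last (a+b))) ψ) ⊓
  (Formula.relabel (Fin.snoc (fun j => (Fin.natAdd a j).castSucc) (Fin.last (a+b))) χ)

lemma snoc_comp_left {M : Type} {a b : ℕ} (v : Fin (a+b) → M) (s : M) :
    (Fin.snoc v s ∘ (Fin.snoc (fun i => (Fin.castAdd b i).castSucc) (Fin.last (a+b)) : Fin (a+1) → Fin (a+b+1)))
      = Fin.snoc (v ∘ Fin.castAdd b) s := by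
  funext j
  refine Fin.lastCases ?_ (fun j0 => ?_) j
  · simp
  · simp

lemma snoc_comp_right {M : Type} {a b : ℕ} (v : Fin (a+b) → M) (s : M) :
    (Fin.snoc v s ∘ (Fin.snoc (fun j => (Fin.natAdd a j).castSucc) (Fin.last (a+b)) : Fin (b+1) → Fin (a+b+1)))
      = Fin.snoc (v ∘ Fin.natAdd a) s := by
  funext j
  refine Fin.lastCases ?_ (fun j0 => ?_) j
  · simp
  · simp [-Fin.castSucc_natAdd, Fin.natAdd_castSucc]

lemma solSetR_bCons {M : Type} (H : SimpleGraph M) {a b : ℕ}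
    (ψ : Language.graph.Formula (Fin (a+1))) (χ : Language.graph.Formula (Fin (b+1))) (s : M) :
    solSetR H (bCons ψ χ) s
      = {v | (v ∘ Fin.castAdd b) ∈ solSetR H ψ s ∧ (v ∘ Fin.natAdd a) ∈ solSetR H χ s} := by
  letI := H.structure
  ext v
  simp only [solSetR, Set.mem_setOf_eq, bCons, Formula.realize_inf, Formula.realize_relabel,
    snoc_comp_left, snoc_comp_right]

/-- counting product split -/
lemma splitG {M : Type} {a b : ℕ} (A : Set (Fin a → M)) (B : Set (Fin b → M)) :
    Nat.card {v : Fin (a+b) → M | (v ∘ Fin.castAdd b) ∈ A ∧ (v ∘ Fin.natAdd a) ∈ B}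
      = Nat.card A * Nat.card B := by
  rw [← Nat.card_prod]
  apply Nat.card_congr
  refine ⟨fun x => (⟨x.1 ∘ Fin.castAdd b, x.2.1⟩, ⟨x.1 ∘ Fin.natAdd a, x.2.2⟩),
    fun y => ⟨Fin.append y.1.1 y.2.1, ?_, ?_⟩, ?_, ?_⟩
  · have : (Fin.append (y.1 : Fin a → M) (y.2 : Fin b → M) ∘ Fin.castAdd b) = (y.1 : Fin a → M) := by
      funext i; simp [Fin.append_left]
    rw [this]; exact y.1.2
  · have : (Fin.append (y.1 : Fin a → M) (y.2 : Fin b → M) ∘ Fin.natAdd a) = (y.2 : Fin b → M) := by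
      funext i; simp [Fin.append_right]
    rw [this]; exact y.2.2
  · rintro ⟨v, hv⟩
    apply Subtype.ext
    funext i
    refine Fin.addCases (fun i0 => ?_) (fun i0 => ?_) i
    · simp [Fin.append_left]
    · simp [Fin.append_right]
  · rintro ⟨⟨x, hx⟩, ⟨y, hy⟩⟩
    apply Prod.ext <;> apply Subtype.ext
    · funext i; simp [Fin.append_left]
    · funext i; simp [Fin.append_right]

section Measures
variable {W : Type} [MeasurableSpace W] (ν : Measure W) [IsProbabilityMeasure ν]

lemma measurable_snocMap {p : ℕ} (s : W) :
    Measurable (fun v : Fin p → W => (Fin.snoc v s : Fin (p+1) → W)) := by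
  apply measurable_pi_lambda
  intro i
  refine Fin.lastCases ?_ (fun i0 => ?_) i
  · simpa [Fin.snoc_last] using measurable_const
  · simpa [Fin.snoc_castSucc] using measurable_pi_apply i0

lemma solSetR_eq_preimage {L : SimpleGraph W} {p : ℕ} (φ : Language.graph.Formula (Fin (p+1))) (s : W) :
    solSetR L φ s = (fun v : Fin p → W => (Fin.snoc v s : Fin (p+1) → W)) ⁻¹' (solSet L φ) := rfl

lemma measurableSet_solSetR {L : SimpleGraph W}
    (hmeas : ∀ (p : ℕ) (φ : Language.graph.Formula (Fin p)), MeasurableSet (solSet L φ))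
    {p : ℕ} (φ : Language.graph.Formula (Fin (p+1))) (s : W) :
    MeasurableSet (solSetR L φ s) := by
  rw [solSetR_eq_preimage]
  exact (hmeas _ φ).preimage (measurable_snocMap s)

lemma splitL {a b : ℕ} (A : Set (Fin a → W)) (B : Set (Fin b → W))
    (hA : MeasurableSet A) (hB : MeasurableSet B) :
    (Measure.pi fun _ : Fin (a+b) => ν)
        {v : Fin (a+b) → W | (v ∘ Fin.castAdd b) ∈ A ∧ (v ∘ Fin.natAdd a) ∈ B}
      = (Measure.pi fun _ : Fin a => ν) A * (Measure.pi fun _ : Fin b => ν) B := by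
  have h1 := (MeasureTheory.measurePreserving_piCongrLeft
      (fun _ : Fin (a+b) => ν) (finSumFinEquiv : Fin a ⊕ Fin b ≃ Fin (a+b))).symm
  have h2 := MeasureTheory.measurePreserving_sumPiEquivProdPi
      (fun _ : Fin a ⊕ Fin b => ν)
  have hcomp := h2.comp h1
  have hset : {v : Fin (a+b) → W | (v ∘ Fin.castAdd b) ∈ A ∧ (v ∘ Fin.natAdd a) ∈ B}
      = ((MeasurableEquiv.sumPiEquivProdPi (fun _ : Fin a ⊕ Fin b => W)) ∘
         (MeasurableEquiv.piCongrLeft (fun _ : Fin (a+b) => W) finSumFinEquiv).symm) ⁻¹' (A ×ˢ B) := by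
    ext v
    constructor
    · rintro ⟨h1', h2'⟩; exact ⟨h1', h2'⟩
    · rintro ⟨h1', h2'⟩; exact ⟨h1', h2'⟩
  rw [hset, hcomp.measure_preimage ((hA.prod hB).nullMeasurableSet)]
  exact Measure.prod_prod A B

end Measures

section ListFla

lemma snoc_zero_eq {M : Type} (v : Fin 0 → M) (s : M) :
    (Fin.snoc v s : Fin 1 → M) = fun _ => s := by
  funext i
  have hi : i = Fin.last 0 := Fin.ext (by omega)
  rw [hi, Fin.snoc_last]

lemma solSetR_base_mem {M : Type} (H : SimpleGraph M) (ξ : Language.graph.Formula (Fin 1)) (s : M)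
    (h : s ∈ sol1 H ξ) :
    solSetR H (ξ : Language.graph.Formula (Fin (0+1))) s = (Set.univ : Set (Fin 0 → M)) := by
  letI := H.structure
  ext v
  simp only [solSetR, Set.mem_setOf_eq, Set.mem_univ, iff_true]
  rw [snoc_zero_eq]
  exact h

lemma solSetR_base_not {M : Type} (H : SimpleGraph M) (ξ : Language.graph.Formula (Fin 1)) (s : M)
    (h : s ∉ sol1 H ξ) :
    solSetR H (ξ : Language.graph.Formula (Fin (0+1))) s = (∅ : Set (Fin 0 → M)) := by
  letI := H.structure
  ext v
  simp only [solSetR, Set.mem_setOf_eq, Set.mem_empty_iff_false, iff_false]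
  rw [snoc_zero_eq]
  exact h

/-- arity of the block conjunction over a list of rooted formulas -/
def arL : List (Σ p : ℕ, Language.graph.Formula (Fin (p+1))) → ℕ
  | [] => 0
  | x :: t => x.1 + arL t

/-- block conjunction of `ξ(y)` with a list of rooted formulas, sharing the root -/
def listFla (ξ : Language.graph.Formula (Fin 1)) :
    (l : List (Σ p : ℕ, Language.graph.Formula (Fin (p+1)))) →
      Language.graph.Formula (Fin (arL l + 1))
  | [] => ξ
  | x :: t => bCons x.2 (listFla ξ t)

lemma solSetR_listFla_subset {M : Type} (H : SimpleGraph M) (ξ : Language.graph.Formula (Fin 1))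
    (l : List (Σ p : ℕ, Language.graph.Formula (Fin (p+1)))) (s : M)
    (v : Fin (arL l) → M) (hv : v ∈ solSetR H (listFla ξ l) s) : s ∈ sol1 H ξ := by
  induction l with
  | nil =>
    by_contra h
    have hv' : v ∈ solSetR H (ξ : Language.graph.Formula (Fin (0+1))) s := hv
    rw [solSetR_base_not H ξ s h] at hv'
    exact hv'
  | cons x t ih =>
    have hv' : v ∈ solSetR H (bCons x.2 (listFla ξ t)) s := hv
    rw [solSetR_bCons] at hv'
    exact ih _ hv'.2

end ListFla

section StoneProd

lemma stoneGR_bCons {M : Type} (fM : Fintype M) (H : SimpleGraph M) {a b : ℕ}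
    (ψ : Language.graph.Formula (Fin (a+1))) (χ : Language.graph.Formula (Fin (b+1))) (s : M) :
    stoneGR fM H (bCons ψ χ) s = stoneGR fM H ψ s * stoneGR fM H χ s := by
  unfold stoneGR
  rw [solSetR_bCons]
  rw [show {v | (v ∘ Fin.castAdd b) ∈ solSetR H ψ s ∧ (v ∘ Fin.natAdd a) ∈ solSetR H χ s}
    = {v : Fin (a+b) → M | (v ∘ Fin.castAdd b) ∈ solSetR H ψ s ∧ (v ∘ Fin.natAdd a) ∈ solSetR H χ s} from rfl]
  rw [splitG (solSetR H ψ s) (solSetR H χ s)]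
  rw [pow_add, Nat.cast_mul]
  rw [div_mul_div_comm]

lemma nat_card_univ_fin0 {M : Type} : Nat.card (Set.univ : Set (Fin 0 → M)) = 1 := by
  rw [Nat.card_congr (Equiv.Set.univ _)]
  exact Nat.card_unique

lemma stoneGR_listFla {M : Type} (fM : Fintype M) (H : SimpleGraph M)
    (ξ : Language.graph.Formula (Fin 1))
    (l : List (Σ p : ℕ, Language.graph.Formula (Fin (p+1)))) (s : M) (hs : s ∈ sol1 H ξ) :
    stoneGR fM H (listFla ξ l) s = (l.map (fun x => stoneGR fM H x.2 s)).prod := by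
  induction l with
  | nil =>
    rw [listFla]
    show stoneGR fM H (ξ : Language.graph.Formula (Fin (0+1))) s = _
    rw [stoneGR, solSetR_base_mem H ξ s hs, nat_card_univ_fin0]
    simp
  | cons x t ih =>
    rw [listFla]
    show stoneGR fM H (bCons x.2 (listFla ξ t)) s = _
    rw [stoneGR_bCons, ih, List.map_cons, List.prod_cons]

variable {W : Type} [MeasurableSpace W] (ν : Measure W) [IsProbabilityMeasure ν]

lemma stoneLR_bCons (L : SimpleGraph W)
    (hmeas : ∀ (p : ℕ) (φ : Language.graph.Formula (Fin p)), MeasurableSet (solSet L φ))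
    {a b : ℕ} (ψ : Language.graph.Formula (Fin (a+1))) (χ : Language.graph.Formula (Fin (b+1))) (s : W) :
    stoneLR L ν (bCons ψ χ) s = stoneLR L ν ψ s * stoneLR L ν χ s := by
  unfold stoneLR
  rw [solSetR_bCons]
  rw [show {v | (v ∘ Fin.castAdd b) ∈ solSetR L ψ s ∧ (v ∘ Fin.natAdd a) ∈ solSetR L χ s}
    = {v : Fin (a+b) → W | (v ∘ Fin.castAdd b) ∈ solSetR L ψ s ∧ (v ∘ Fin.natAdd a) ∈ solSetR L χ s} from rfl]
  rw [splitL ν _ _ (measurableSet_solSetR hmeas ψ s) (measurableSet_solSetR hmeas χ s)]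
  rw [ENNReal.toReal_mul]

lemma stoneLR_listFla (L : SimpleGraph W)
    (hmeas : ∀ (p : ℕ) (φ : Language.graph.Formula (Fin p)), MeasurableSet (solSet L φ))
    (ξ : Language.graph.Formula (Fin 1))
    (l : List (Σ p : ℕ, Language.graph.Formula (Fin (p+1)))) (s : W) (hs : s ∈ sol1 L ξ) :
    stoneLR L ν (listFla ξ l) s = (l.map (fun x => stoneLR L ν x.2 s)).prod := by
  induction l with
  | nil =>
    rw [listFla]
    show stoneLR L ν (ξ : Language.graph.Formula (Fin (0+1))) s = _
    rw [stoneLR, solSetR_base_mem L ξ s hs]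
    simp
  | cons x t ih =>
    rw [listFla]
    show stoneLR L ν (bCons x.2 (listFla ξ t)) s = _
    rw [stoneLR_bCons ν L hmeas, ih, List.map_cons, List.prod_cons]

end StoneProd

section CountImpl

open Finset

lemma range_filter_succ_le (c k : ℕ) (h : c ≤ k) :
    (Finset.range k).filter (fun i => i + 1 ≤ c) = Finset.range c := by
  ext j
  simp only [Finset.mem_filter, Finset.mem_range]
  omega

lemma nat_card_set_filter {X : Type} [Fintype X] (A : Set X) [DecidablePred (· ∈ A)] :
    Nat.card A = (Finset.univ.filter (· ∈ A)).card := by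
  rw [Nat.card_eq_fintype_card]
  exact Fintype.card_subtype _

lemma sumA_G {M : Type} (fM : Fintype M) (H : SimpleGraph M)
    (ξ : Language.graph.Formula (Fin 1)) {q : ℕ}
    (χ : Language.graph.Formula (Fin (q+1))) (k : ℕ)
    (himp : ∀ (v : Fin q → M) s, v ∈ solSetR H χ s → s ∈ sol1 H ξ)
    (hcard : (Set.toFinite (sol1 H ξ)).toFinset.card ≤ k) :
    ∑ i ∈ Finset.range k, Nat.card (solSet H (exDist (i+1) χ))
      = ∑ s ∈ (Set.toFinite (sol1 H ξ)).toFinset, Nat.card (solSetR H χ s) := by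
  classical
  set S : Finset M := (Set.toFinite (sol1 H ξ)).toFinset with hS
  set T : (Fin q → M) → Finset M := fun v => S.filter (fun s => v ∈ solSetR H χ s) with hT
  have hTall : ∀ (v : Fin q → M) (s : M), v ∈ solSetR H χ s ↔ s ∈ T v := by
    intro v s
    constructor
    · intro h
      rw [hT]
      exact Finset.mem_filter.2 ⟨by rw [hS]; exact (Set.Finite.mem_toFinset _).2 (himp v s h), h⟩
    · intro h
      exact (Finset.mem_filter.1 h).2
  have hTcard : ∀ v, (T v).card ≤ k := fun v => le_trans (Finset.card_filter_le S _) hcard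
  have hmem : ∀ (i : ℕ) (v : Fin q → M),
      v ∈ solSet H (exDist (i+1) χ) ↔ i + 1 ≤ (T v).card := by
    intro i v
    rw [solSet_exDist]
    rw [Set.mem_setOf_eq]
    rw [← exists_inj_iff_card_le (T v) (i+1)]
    constructor
    · rintro ⟨f, hinj, hf⟩; exact ⟨f, hinj, fun l => (hTall v (f l)).1 (hf l)⟩
    · rintro ⟨f, hinj, hf⟩; exact ⟨f, hinj, fun l => (hTall v (f l)).2 (hf l)⟩
  calc ∑ i ∈ Finset.range k, Nat.card (solSet H (exDist (i+1) χ))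
      = ∑ i ∈ Finset.range k, (Finset.univ.filter (fun v => i + 1 ≤ (T v).card)).card := by
        refine Finset.sum_congr rfl (fun i _ => ?_)
        rw [nat_card_set_filter]
        congr 1
        apply Finset.filter_congr
        intro v _
        simp only [hmem i v]
    _ = ∑ i ∈ Finset.range k, ∑ v : Fin q → M, (if i + 1 ≤ (T v).card then 1 else 0) := by
        refine Finset.sum_congr rfl (fun i _ => ?_)
        rw [Finset.card_filter]
    _ = ∑ v : Fin q → M, ∑ i ∈ Finset.range k, (if i + 1 ≤ (T v).card then 1 else 0) :=
        Finset.sum_comm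
    _ = ∑ v : Fin q → M, (T v).card := by
        refine Finset.sum_congr rfl (fun v _ => ?_)
        rw [← Finset.card_filter, range_filter_succ_le _ _ (hTcard v), Finset.card_range]
    _ = ∑ v : Fin q → M, ∑ s ∈ S, (if v ∈ solSetR H χ s then 1 else 0) := by
        refine Finset.sum_congr rfl (fun v _ => ?_)
        rw [← Finset.card_filter]
    _ = ∑ s ∈ S, ∑ v : Fin q → M, (if v ∈ solSetR H χ s then 1 else 0) := Finset.sum_comm
    _ = ∑ s ∈ S, Nat.card (solSetR H χ s) := by
        refine Finset.sum_congr rfl (fun s _ => ?_)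
        rw [← Finset.card_filter, nat_card_set_filter]

lemma sumA_G_stone {M : Type} (fM : Fintype M) (H : SimpleGraph M)
    (ξ : Language.graph.Formula (Fin 1)) {q : ℕ}
    (χ : Language.graph.Formula (Fin (q+1))) (k : ℕ)
    (himp : ∀ (v : Fin q → M) s, v ∈ solSetR H χ s → s ∈ sol1 H ξ)
    (hcard : (Set.toFinite (sol1 H ξ)).toFinset.card ≤ k) :
    ∑ i ∈ Finset.range k, stoneG fM H (exDist (i+1) χ)
      = ∑ s ∈ (Set.toFinite (sol1 H ξ)).toFinset, stoneGR fM H χ s := by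
  unfold stoneG stoneGR
  rw [← Finset.sum_div, ← Finset.sum_div]
  congr 1
  rw [← Nat.cast_sum, ← Nat.cast_sum, sumA_G fM H ξ χ k himp hcard]

variable {W : Type} [MeasurableSpace W] (ν : Measure W) [IsProbabilityMeasure ν]

lemma sumA_L (L : SimpleGraph W)
    (hmeas : ∀ (p : ℕ) (φ : Language.graph.Formula (Fin p)), MeasurableSet (solSet L φ))
    (ξ : Language.graph.Formula (Fin 1)) {q : ℕ}
    (χ : Language.graph.Formula (Fin (q+1))) (k : ℕ)
    (himp : ∀ (v : Fin q → W) s, v ∈ solSetR L χ s → s ∈ sol1 L ξ)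
    (hfin : (sol1 L ξ).Finite) (hcard : hfin.toFinset.card ≤ k) :
    ∑ i ∈ Finset.range k, stoneL L ν (exDist (i+1) χ)
      = ∑ s ∈ hfin.toFinset, stoneLR L ν χ s := by
  classical
  set μ : Measure (Fin q → W) := Measure.pi (fun _ : Fin q => ν) with hμ
  set S : Finset W := hfin.toFinset with hS
  set T : (Fin q → W) → Finset W := fun v => S.filter (fun s => v ∈ solSetR L χ s) with hT
  have hTall : ∀ (v : Fin q → W) (s : W), v ∈ solSetR L χ s ↔ s ∈ T v := by
    intro v s
    constructor
    · intro h
      exact Finset.mem_filter.2 ⟨by rw [hS]; exact (Set.Finite.mem_toFinset _).2 (himp v s h), h⟩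
    · intro h
      exact (Finset.mem_filter.1 h).2
  have hTcard : ∀ v, (T v).card ≤ k := fun v => le_trans (Finset.card_filter_le S _) hcard
  have hmem : ∀ (i : ℕ) (v : Fin q → W),
      v ∈ solSet L (exDist (i+1) χ) ↔ i + 1 ≤ (T v).card := by
    intro i v
    rw [solSet_exDist, Set.mem_setOf_eq, ← exists_inj_iff_card_le (T v) (i+1)]
    constructor
    · rintro ⟨f, hinj, hf⟩; exact ⟨f, hinj, fun l => (hTall v (f l)).1 (hf l)⟩
    · rintro ⟨f, hinj, hf⟩; exact ⟨f, hinj, fun l => (hTall v (f l)).2 (hf l)⟩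
  have claim1 : ∀ v : Fin q → W,
      (∑ i ∈ Finset.range k, (solSet L (exDist (i+1) χ)).indicator (1 : (Fin q → W) → ℝ≥0∞) v)
        = ∑ s ∈ S, (solSetR L χ s).indicator (1 : (Fin q → W) → ℝ≥0∞) v := by
    intro v
    have lhs : ∀ i, (solSet L (exDist (i+1) χ)).indicator (1 : (Fin q → W) → ℝ≥0∞) v
        = if i + 1 ≤ (T v).card then 1 else 0 := by
      intro i
      simp only [Set.indicator_apply, Pi.one_apply]
      congr 1
      simp only [eq_iff_iff]; exact hmem i v
    have rhs : ∀ s, (solSetR L χ s).indicator (1 : (Fin q → W) → ℝ≥0∞) v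
        = if s ∈ T v then 1 else 0 := by
      intro s
      simp only [Set.indicator_apply, Pi.one_apply]
      congr 1
      simp only [eq_iff_iff]; exact hTall v s
    simp only [lhs, rhs]
    rw [Finset.sum_boole, Finset.sum_boole]
    rw [range_filter_succ_le _ _ (hTcard v), Finset.card_range]
    congr 1
    rw [Finset.filter_mem_eq_inter, Finset.inter_eq_right.2 (Finset.filter_subset _ _)]
  have claim2 : ∑ i ∈ Finset.range k, μ (solSet L (exDist (i+1) χ))
      = ∑ s ∈ S, μ (solSetR L χ s) := by
    have hmA : ∀ i : ℕ, MeasurableSet (solSet L (exDist (i+1) χ)) := fun i => hmeas _ _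
    have hmB : ∀ s : W, MeasurableSet (solSetR L χ s) := fun s => measurableSet_solSetR hmeas χ s
    calc ∑ i ∈ Finset.range k, μ (solSet L (exDist (i+1) χ))
        = ∑ i ∈ Finset.range k, ∫⁻ v, (solSet L (exDist (i+1) χ)).indicator (1 : (Fin q → W) → ℝ≥0∞) v ∂μ := by
          refine Finset.sum_congr rfl (fun i _ => ?_)
          rw [MeasureTheory.lintegral_indicator_one (hmA i)]
      _ = ∫⁻ v, ∑ i ∈ Finset.range k, (solSet L (exDist (i+1) χ)).indicator (1 : (Fin q → W) → ℝ≥0∞) v ∂μ := by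
          rw [MeasureTheory.lintegral_finset_sum]
          intro i _
          exact (measurable_const.indicator (hmA i))
      _ = ∫⁻ v, ∑ s ∈ S, (solSetR L χ s).indicator (1 : (Fin q → W) → ℝ≥0∞) v ∂μ := by
          apply lintegral_congr
          intro v
          exact claim1 v
      _ = ∑ s ∈ S, ∫⁻ v, (solSetR L χ s).indicator (1 : (Fin q → W) → ℝ≥0∞) v ∂μ := by
          rw [MeasureTheory.lintegral_finset_sum]
          intro s _
          exact (measurable_const.indicator (hmB s))
      _ = ∑ s ∈ S, μ (solSetR L χ s) := by
          refine Finset.sum_congr rfl (fun s _ => ?_)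
          rw [MeasureTheory.lintegral_indicator_one (hmB s)]
  unfold stoneL stoneLR
  rw [← ENNReal.toReal_sum (fun i _ => measure_ne_top μ _),
      ← ENNReal.toReal_sum (fun s _ => measure_ne_top μ _)]
  rw [claim2]

end CountImpl

section Poly
variable {J : ℕ}

/-- formal polynomials as lists of (coefficient, monomial) pairs -/
def evalP (P : List (ℝ × List (Fin J))) (x : Fin J → ℝ) : ℝ :=
  (P.map (fun t => t.1 * ((t.2.map x).prod))).sum

@[simp] lemma evalP_nil (x : Fin J → ℝ) : evalP ([] : List (ℝ × List (Fin J))) x = 0 := rfl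

@[simp] lemma evalP_cons (t : ℝ × List (Fin J)) (P : List (ℝ × List (Fin J))) (x : Fin J → ℝ) :
    evalP (t :: P) x = t.1 * ((t.2.map x).prod) + evalP P x := by
  simp [evalP]

def mulP : List (ℝ × List (Fin J)) → List (ℝ × List (Fin J)) → List (ℝ × List (Fin J))
  | [], _ => []
  | t :: P, Q => (Q.map (fun u => (t.1 * u.1, t.2 ++ u.2))) ++ mulP P Q

lemma evalP_map_term (t : ℝ × List (Fin J)) (Q : List (ℝ × List (Fin J))) (x : Fin J → ℝ) :
    evalP (Q.map (fun u => (t.1 * u.1, t.2 ++ u.2))) x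
      = (t.1 * ((t.2.map x).prod)) * evalP Q x := by
  induction Q with
  | nil => simp
  | cons u Q ih =>
    simp only [List.map_cons, evalP_cons, ih, List.map_append, List.prod_append]
    ring

lemma evalP_mulP (P Q : List (ℝ × List (Fin J))) (x : Fin J → ℝ) :
    evalP (mulP P Q) x = evalP P x * evalP Q x := by
  induction P with
  | nil => simp [mulP]
  | cons t P ih =>
    rw [mulP]
    show evalP _ x = _
    rw [evalP, List.map_append, List.sum_append, ← evalP, ← evalP, evalP_map_term, ih, evalP_cons]
    ring

def powP (P : List (ℝ × List (Fin J))) : ℕ → List (ℝ × List (Fin J))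
  | 0 => [(1, [])]
  | M + 1 => mulP P (powP P M)

lemma evalP_powP (P : List (ℝ × List (Fin J))) (M : ℕ) (x : Fin J → ℝ) :
    evalP (powP P M) x = (evalP P x) ^ M := by
  induction M with
  | zero => simp [powP, evalP]
  | succ M ih => rw [powP, evalP_mulP, ih, pow_succ]; ring

def subC (j : Fin J) (c : ℝ) : List (ℝ × List (Fin J)) :=
  [(1 - c^2, []), (2*c, [j]), (-1, [j,j])]

lemma evalP_subC (j : Fin J) (c : ℝ) (x : Fin J → ℝ) :
    evalP (subC j c) x = 1 - (x j - c)^2 := by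
  simp [subC, evalP]
  ring

def bumpP (c : Fin J → ℝ) : List (ℝ × List (Fin J)) :=
  (List.finRange J).foldr (fun j acc => mulP (subC j (c j)) acc) [(1, [])]

lemma evalP_bumpP (c : Fin J → ℝ) (x : Fin J → ℝ) :
    evalP (bumpP c) x = ∏ j, (1 - (x j - c j)^2) := by
  rw [Fin.prod_univ_def]
  rw [bumpP]
  induction (List.finRange J) with
  | nil => simp [evalP]
  | cons j t ih =>
    rw [List.foldr_cons, evalP_mulP, ih, evalP_subC, List.map_cons, List.prod_cons]

end Poly

section Bounds

lemma stoneGR_nonneg {M : Type} (fM : Fintype M) (H : SimpleGraph M) {p : ℕ}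
    (φ : Language.graph.Formula (Fin (p+1))) (s : M) : 0 ≤ stoneGR fM H φ s := by
  unfold stoneGR
  positivity

lemma stoneGR_le_one {M : Type} (fM : Fintype M) [Nonempty M] (H : SimpleGraph M) {p : ℕ}
    (φ : Language.graph.Formula (Fin (p+1))) (s : M) : stoneGR fM H φ s ≤ 1 := by
  classical
  unfold stoneGR
  rw [div_le_one (by positivity)]
  have h1 : Nat.card (solSetR H φ s) ≤ Nat.card (Fin p → M) := by
    rw [Nat.card_eq_fintype_card, Nat.card_eq_fintype_card]
    exact Fintype.card_le_of_injective Subtype.val Subtype.val_injective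
  have h2 : (Nat.card (Fin p → M) : ℝ) = (Fintype.card M : ℝ) ^ p := by
    rw [Nat.card_eq_fintype_card, Fintype.card_fun]
    simp
  calc (Nat.card (solSetR H φ s) : ℝ) ≤ (Nat.card (Fin p → M) : ℝ) := by exact_mod_cast h1
    _ = _ := h2

lemma stoneLR_nonneg {W : Type} [MeasurableSpace W] (L : SimpleGraph W) (ν : Measure W)
    {p : ℕ} (φ : Language.graph.Formula (Fin (p+1))) (s : W) : 0 ≤ stoneLR L ν φ s :=
  ENNReal.toReal_nonneg

lemma stoneLR_le_one {W : Type} [MeasurableSpace W] (L : SimpleGraph W) (ν : Measure W)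
    [IsProbabilityMeasure ν] {p : ℕ} (φ : Language.graph.Formula (Fin (p+1))) (s : W) :
    stoneLR L ν φ s ≤ 1 := by
  unfold stoneLR
  exact ENNReal.toReal_le_of_le_ofReal one_pos.le (by simpa using prob_le_one)

end Bounds

section Main

variable (V : ℕ → Type) (fV : ∀ n, Fintype (V n)) (G : ∀ n, SimpleGraph (V n))
variable {W : Type} [MeasurableSpace W] (L : SimpleGraph W) (ν : Measure W) [IsProbabilityMeasure ν]

/-- a `Fin 0`-ary formula holds in a finite graph iff its Stone pairing is `> 1/2`. -/
lemma stoneG_zero_ary {M : Type} (fM : Fintype M) (H : SimpleGraph M)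
    (φ : Language.graph.Formula (Fin 0)) :
    stoneG fM H φ = 1 ∨ stoneG fM H φ = 0 := by
  by_cases h : (default : Fin 0 → M) ∈ solSet H φ
  · left
    have : solSet H φ = Set.univ := by
      ext v; rw [Subsingleton.elim v (default : Fin 0 → M)]; simpa using h
    rw [stoneG, this, nat_card_univ_fin0]
    simp
  · right
    have : solSet H φ = ∅ := by
      ext v; rw [Subsingleton.elim v (default : Fin 0 → M)]; simpa using h
    rw [stoneG, this]
    simp

lemma solSet_zero_univ_of_mem {M : Type} (H : SimpleGraph M)
    (φ : Language.graph.Formula (Fin 0)) (h : (default : Fin 0 → M) ∈ solSet H φ) :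
    solSet H φ = Set.univ := by
  ext v; rw [Subsingleton.elim v (default : Fin 0 → M)]; simpa using h

lemma eventually_card_eq
    (hlim : ∀ (p : ℕ) (φ : Language.graph.Formula (Fin p)),
      Tendsto (fun n => stoneG (fV n) (G n) φ) atTop (nhds (stoneL L ν φ)))
    (ξ : Language.graph.Formula (Fin 1)) (hfin : (sol1 L ξ).Finite) (k : ℕ)
    (hk : hfin.toFinset.card = k) :
    ∀ᶠ n in atTop, (Set.toFinite (sol1 (G n) ξ)).toFinset.card = k := by
  classical
  -- the upper formula
  have hub : solSet L (exDist (k+1) (ξ : Language.graph.Formula (Fin (0+1)))) = ∅ := by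
    rw [solSet_exDist]
    ext v
    simp only [Set.mem_setOf_eq, Set.mem_empty_iff_false, iff_false]
    rintro ⟨f, hinj, hf⟩
    have : k + 1 ≤ hfin.toFinset.card := by
      rw [← exists_inj_iff_card_le]
      refine ⟨f, hinj, fun l => ?_⟩
      have := hf l
      by_contra hmem
      rw [solSetR_base_not L ξ (f l) (fun hc => hmem ((Set.Finite.mem_toFinset hfin).2 hc))] at this
      exact this
    omega
  have hlb : solSet L (exDist k (ξ : Language.graph.Formula (Fin (0+1)))) = Set.univ := by
    rw [solSet_exDist]
    ext v
    simp only [Set.mem_setOf_eq, Set.mem_univ, iff_true]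
    obtain ⟨f, hinj, hf⟩ := (exists_inj_iff_card_le hfin.toFinset k).2 (le_of_eq hk.symm)
    refine ⟨f, hinj, fun l => ?_⟩
    rw [solSetR_base_mem L ξ (f l) ((Set.Finite.mem_toFinset hfin).1 (hf l))]
    trivial
  have hSub : stoneL L ν (exDist (k+1) (ξ : Language.graph.Formula (Fin (0+1)))) = 0 := by
    rw [stoneL, hub]
    simp
  have hSlb : stoneL L ν (exDist k (ξ : Language.graph.Formula (Fin (0+1)))) = 1 := by
    rw [stoneL, hlb]
    simp
  have t1 := hlim 0 (exDist (k+1) (ξ : Language.graph.Formula (Fin (0+1))))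
  have t2 := hlim 0 (exDist k (ξ : Language.graph.Formula (Fin (0+1))))
  rw [hSub] at t1
  rw [hSlb] at t2
  have e1 : ∀ᶠ n in atTop,
      stoneG (fV n) (G n) (exDist (k+1) (ξ : Language.graph.Formula (Fin (0+1)))) < 1/2 :=
    t1.eventually (gt_mem_nhds (by norm_num))
  have e2 : ∀ᶠ n in atTop,
      (1:ℝ)/2 < stoneG (fV n) (G n) (exDist k (ξ : Language.graph.Formula (Fin (0+1)))) :=
    t2.eventually (lt_mem_nhds (by norm_num))
  filter_upwards [e1, e2] with n h1 h2
  -- upper bound : fewer than k+1 elements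
  have hup : ¬ ((default : Fin 0 → V n) ∈ solSet (G n) (exDist (k+1) (ξ : Language.graph.Formula (Fin (0+1))))) := by
    intro hd
    have : stoneG (fV n) (G n) (exDist (k+1) (ξ : Language.graph.Formula (Fin (0+1)))) = 1 := by
      rw [stoneG, solSet_zero_univ_of_mem _ _ hd, nat_card_univ_fin0]
      simp
    rw [this] at h1
    norm_num at h1
  have hlo : (default : Fin 0 → V n) ∈ solSet (G n) (exDist k (ξ : Language.graph.Formula (Fin (0+1)))) := by
    by_contra hd
    have : solSet (G n) (exDist k (ξ : Language.graph.Formula (Fin (0+1)))) = ∅ := by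
      ext v; rw [Subsingleton.elim v (default : Fin 0 → V n)]; simpa using hd
    have : stoneG (fV n) (G n) (exDist k (ξ : Language.graph.Formula (Fin (0+1)))) = 0 := by
      rw [stoneG, this]; simp
    rw [this] at h2
    norm_num at h2
  -- convert to cardinalities
  have hcard_ge : k ≤ (Set.toFinite (sol1 (G n) ξ)).toFinset.card := by
    rw [solSet_exDist, Set.mem_setOf_eq] at hlo
    obtain ⟨f, hinj, hf⟩ := hlo
    rw [← exists_inj_iff_card_le]
    refine ⟨f, hinj, fun l => ?_⟩
    have := hf l
    by_contra hmem
    rw [solSetR_base_not (G n) ξ (f l)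
      (fun hc => hmem ((Set.Finite.mem_toFinset _).2 hc))] at this
    exact this
  have hcard_le : (Set.toFinite (sol1 (G n) ξ)).toFinset.card ≤ k := by
    by_contra hgt
    push_neg at hgt
    apply hup
    rw [solSet_exDist, Set.mem_setOf_eq]
    obtain ⟨f, hinj, hf⟩ := (exists_inj_iff_card_le (Set.toFinite (sol1 (G n) ξ)).toFinset (k+1)).2 hgt
    refine ⟨f, hinj, fun l => ?_⟩
    rw [solSetR_base_mem (G n) ξ (f l) ((Set.Finite.mem_toFinset _).1 (hf l))]
    trivial
  omega

lemma good_monomial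
    (hmeas : ∀ (p : ℕ) (φ : Language.graph.Formula (Fin p)), MeasurableSet (solSet L φ))
    (hlim : ∀ (p : ℕ) (φ : Language.graph.Formula (Fin p)),
      Tendsto (fun n => stoneG (fV n) (G n) φ) atTop (nhds (stoneL L ν φ)))
    (ξ : Language.graph.Formula (Fin 1)) (hfin : (sol1 L ξ).Finite) (k : ℕ)
    (hk : hfin.toFinset.card = k)
    (hev : ∀ᶠ n in atTop, (Set.toFinite (sol1 (G n) ξ)).toFinset.card = k)
    (l : List (Σ p : ℕ, Language.graph.Formula (Fin (p+1)))) :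
    Tendsto (fun n => ∑ s ∈ (Set.toFinite (sol1 (G n) ξ)).toFinset,
        (l.map (fun x => stoneGR (fV n) (G n) x.2 s)).prod)
      atTop
      (nhds (∑ s ∈ hfin.toFinset, (l.map (fun x => stoneLR L ν x.2 s)).prod)) := by
  have hL : ∑ i ∈ Finset.range k, stoneL L ν (exDist (i+1) (listFla ξ l))
      = ∑ s ∈ hfin.toFinset, (l.map (fun x => stoneLR L ν x.2 s)).prod := by
    rw [sumA_L ν L hmeas ξ (listFla ξ l) k
      (fun v s h => solSetR_listFla_subset L ξ l s v h) hfin (le_of_eq hk)]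
    refine Finset.sum_congr rfl (fun s hs => ?_)
    exact stoneLR_listFla ν L hmeas ξ l s ((Set.Finite.mem_toFinset hfin).1 hs)
  have hT : Tendsto (fun n => ∑ i ∈ Finset.range k, stoneG (fV n) (G n) (exDist (i+1) (listFla ξ l)))
      atTop (nhds (∑ i ∈ Finset.range k, stoneL L ν (exDist (i+1) (listFla ξ l)))) :=
    tendsto_finset_sum _ (fun i _ => hlim _ (exDist (i+1) (listFla ξ l)))
  rw [hL] at hT
  apply hT.congr'
  filter_upwards [hev] with n hn
  rw [sumA_G_stone (fV n) (G n) ξ (listFla ξ l) k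
    (fun v s h => solSetR_listFla_subset (G n) ξ l s v h) (le_of_eq hn)]
  refine Finset.sum_congr rfl (fun s hs => ?_)
  exact stoneGR_listFla (fV n) (G n) ξ l s ((Set.Finite.mem_toFinset _).1 hs)

lemma good_evalP {J : ℕ}
    (hmeas : ∀ (p : ℕ) (φ : Language.graph.Formula (Fin p)), MeasurableSet (solSet L φ))
    (hlim : ∀ (p : ℕ) (φ : Language.graph.Formula (Fin p)),
      Tendsto (fun n => stoneG (fV n) (G n) φ) atTop (nhds (stoneL L ν φ)))
    (ξ : Language.graph.Formula (Fin 1)) (hfin : (sol1 L ξ).Finite) (k : ℕ)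
    (hk : hfin.toFinset.card = k)
    (hev : ∀ᶠ n in atTop, (Set.toFinite (sol1 (G n) ξ)).toFinset.card = k)
    (e : Fin J → (Σ p : ℕ, Language.graph.Formula (Fin (p+1))))
    (P : List (ℝ × List (Fin J))) :
    Tendsto (fun n => ∑ s ∈ (Set.toFinite (sol1 (G n) ξ)).toFinset,
        evalP P (fun j => stoneGR (fV n) (G n) (e j).2 s))
      atTop
      (nhds (∑ s ∈ hfin.toFinset, evalP P (fun j => stoneLR L ν (e j).2 s))) := by
  induction P with
  | nil => simpa using tendsto_const_nhds
  | cons t P ih =>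
    simp only [evalP_cons, Finset.sum_add_distrib]
    apply Tendsto.add _ ih
    have hmono := good_monomial V fV G L ν hmeas hlim ξ hfin k hk hev (t.2.map e)
    have h1 : (fun n => ∑ s ∈ (Set.toFinite (sol1 (G n) ξ)).toFinset,
        t.1 * ((t.2.map (fun j => stoneGR (fV n) (G n) (e j).2 s)).prod))
        = fun n => t.1 * ∑ s ∈ (Set.toFinite (sol1 (G n) ξ)).toFinset,
          (((t.2.map e)).map (fun x => stoneGR (fV n) (G n) x.2 s)).prod := by
      funext n
      rw [← Finset.mul_sum]
      congr 1
      refine Finset.sum_congr rfl (fun s _ => ?_)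
      rw [List.map_map]
      rfl
    have h2 : (∑ s ∈ hfin.toFinset, t.1 * ((t.2.map (fun j => stoneLR L ν (e j).2 s)).prod))
        = t.1 * ∑ s ∈ hfin.toFinset, (((t.2.map e)).map (fun x => stoneLR L ν x.2 s)).prod := by
      rw [← Finset.mul_sum]
      congr 1
      refine Finset.sum_congr rfl (fun s _ => ?_)
      rw [List.map_map]
      rfl
    rw [h1, h2]
    exact hmono.const_mul t.1

lemma core_eventually (hVne : ∀ n, Nonempty (V n))
    (hmeas : ∀ (p : ℕ) (φ : Language.graph.Formula (Fin p)), MeasurableSet (solSet L φ))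
    (hlim : ∀ (p : ℕ) (φ : Language.graph.Formula (Fin p)),
      Tendsto (fun n => stoneG (fV n) (G n) φ) atTop (nhds (stoneL L ν φ)))
    (ξ : Language.graph.Formula (Fin 1)) (hfin : (sol1 L ξ).Finite) (k : ℕ)
    (hk : hfin.toFinset.card = k)
    (hev : ∀ᶠ n in atTop, (Set.toFinite (sol1 (G n) ξ)).toFinset.card = k)
    (r : W) (hr : r ∈ sol1 L ξ)
    {J : ℕ} (e : Fin J → (Σ p : ℕ, Language.graph.Formula (Fin (p+1))))
    (ε : ℝ) (hε : 0 < ε) :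
    ∀ᶠ n in atTop, ∃ s ∈ sol1 (G n) ξ, ∀ j : Fin J,
      |stoneGR (fV n) (G n) (e j).2 s - stoneLR L ν (e j).2 r| < ε := by
  classical
  set c : Fin J → ℝ := fun j => stoneLR L ν (e j).2 r with hc
  set ε' : ℝ := min ε 1 with hε'
  have hε'pos : 0 < ε' := lt_min hε one_pos
  have hε'le1 : ε' ≤ 1 := min_le_right _ _
  set δ : ℝ := 1 - ε'^2 with hδ
  have hδ0 : 0 ≤ δ := by
    have : ε'^2 ≤ 1 := by nlinarith
    linarith
  have hδ1 : δ < 1 := by nlinarith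
  obtain ⟨M, hM⟩ := exists_pow_lt_of_lt_one
    (show (0:ℝ) < 1/(2*(k+1)) by positivity) hδ1
  -- bump bounds
  have hbump_bounds : ∀ x : Fin J → ℝ, (∀ j, 0 ≤ x j ∧ x j ≤ 1) →
      0 ≤ evalP (bumpP c) x ∧ evalP (bumpP c) x ≤ 1 := by
    intro x hx
    rw [evalP_bumpP]
    have hfac : ∀ j : Fin J, 0 ≤ 1 - (x j - c j)^2 ∧ 1 - (x j - c j)^2 ≤ 1 := by
      intro j
      have hxj := hx j
      have hcj₁ : 0 ≤ c j := stoneLR_nonneg L ν _ r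
      have hcj₂ : c j ≤ 1 := stoneLR_le_one L ν _ r
      constructor <;> nlinarith
    exact ⟨Finset.prod_nonneg (fun j _ => (hfac j).1),
      Finset.prod_le_one (fun j _ => (hfac j).1) (fun j _ => (hfac j).2)⟩
  have hbump_small : ∀ x : Fin J → ℝ, (∀ j, 0 ≤ x j ∧ x j ≤ 1) →
      (∃ j0 : Fin J, ε ≤ |x j0 - c j0|) → evalP (bumpP c) x ≤ δ := by
    intro x hx ⟨j0, hj0⟩
    rw [evalP_bumpP]
    have hfac : ∀ j : Fin J, 0 ≤ 1 - (x j - c j)^2 ∧ 1 - (x j - c j)^2 ≤ 1 := by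
      intro j
      have hxj := hx j
      have hcj₁ : 0 ≤ c j := stoneLR_nonneg L ν _ r
      have hcj₂ : c j ≤ 1 := stoneLR_le_one L ν _ r
      constructor <;> nlinarith
    have hj0f : 1 - (x j0 - c j0)^2 ≤ δ := by
      have h1 : ε' ≤ |x j0 - c j0| := le_trans (min_le_left _ _) hj0
      have h2 : ε'^2 ≤ (x j0 - c j0)^2 := by
        rw [← sq_abs (x j0 - c j0)]
        exact pow_le_pow_left₀ hε'pos.le h1 2
      linarith
    calc ∏ j, (1 - (x j - c j)^2)
        = (1 - (x j0 - c j0)^2) * ∏ j ∈ Finset.univ.erase j0, (1 - (x j - c j)^2) :=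
          (Finset.mul_prod_erase Finset.univ _ (Finset.mem_univ j0)).symm
      _ ≤ δ * 1 := by
          apply mul_le_mul hj0f
            (Finset.prod_le_one (fun j _ => (hfac j).1) (fun j _ => (hfac j).2))
            (Finset.prod_nonneg (fun j _ => (hfac j).1)) hδ0
      _ = δ := mul_one δ
  -- the good limit
  have hgood := good_evalP V fV G L ν hmeas hlim ξ hfin k hk hev e (powP (bumpP c) M)
  have hlimit_ge : (1:ℝ)/2 < ∑ s ∈ hfin.toFinset,
      evalP (powP (bumpP c) M) (fun j => stoneLR L ν (e j).2 s) := by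
    have hterm_r : evalP (powP (bumpP c) M) (fun j => stoneLR L ν (e j).2 r) = 1 := by
      rw [evalP_powP, evalP_bumpP]
      have : ∀ j : Fin J, (1 - ((fun j => stoneLR L ν (e j).2 r) j - c j)^2) = 1 := by
        intro j
        simp [hc]
      rw [Finset.prod_congr rfl (fun j _ => this j)]
      simp
    have hterms_nonneg : ∀ s ∈ hfin.toFinset,
        0 ≤ evalP (powP (bumpP c) M) (fun j => stoneLR L ν (e j).2 s) := by
      intro s _
      rw [evalP_powP]
      exact pow_nonneg (hbump_bounds _ (fun j =>
        ⟨stoneLR_nonneg L ν _ s, stoneLR_le_one L ν _ s⟩)).1 M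
    have := Finset.single_le_sum hterms_nonneg ((Set.Finite.mem_toFinset hfin).2 hr)
    rw [hterm_r] at this
    linarith
  have hev2 := hgood.eventually (lt_mem_nhds hlimit_ge)
  filter_upwards [hev2, hev] with n h1 h2
  by_contra hno
  push_neg at hno
  -- all roots are far: sum is small
  have hall : ∀ s ∈ (Set.toFinite (sol1 (G n) ξ)).toFinset,
      evalP (powP (bumpP c) M) (fun j => stoneGR (fV n) (G n) (e j).2 s) ≤ δ^M := by
    intro s hs
    have hsol : s ∈ sol1 (G n) ξ := (Set.Finite.mem_toFinset _).1 hs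
    obtain ⟨j0, hj0⟩ := hno s hsol
    have hxb : ∀ j : Fin J, 0 ≤ stoneGR (fV n) (G n) (e j).2 s ∧ stoneGR (fV n) (G n) (e j).2 s ≤ 1 := by
      intro j
      have := hVne n
      exact ⟨stoneGR_nonneg (fV n) (G n) _ s, stoneGR_le_one (fV n) (G n) _ s⟩
    rw [evalP_powP]
    exact pow_le_pow_left₀ (hbump_bounds _ hxb).1
      (hbump_small _ hxb ⟨j0, hj0⟩) M
  have hsum_le : ∑ s ∈ (Set.toFinite (sol1 (G n) ξ)).toFinset,
      evalP (powP (bumpP c) M) (fun j => stoneGR (fV n) (G n) (e j).2 s)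
      ≤ (k : ℝ) * δ^M := by
    calc _ ≤ ∑ _s ∈ (Set.toFinite (sol1 (G n) ξ)).toFinset, δ^M := Finset.sum_le_sum hall
      _ = (k : ℝ) * δ^M := by rw [Finset.sum_const, h2, nsmul_eq_mul]
  have hfinal : (k : ℝ) * δ^M < 1/2 := by
    have hkpos : (0:ℝ) ≤ (k:ℝ) := Nat.cast_nonneg k
    have h3 : (k:ℝ) * δ^M ≤ (k:ℝ) * (1/(2*(k+1))) :=
      mul_le_mul_of_nonneg_left hM.le hkpos
    have h4 : (k:ℝ) * (1/(2*(k+1))) < 1/2 := by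
      rw [mul_one_div, div_lt_div_iff₀ (by positivity) (by norm_num)]
      nlinarith [Nat.cast_nonneg (α := ℝ) k]
    linarith
  linarith

end Main

section Enumeration

instance : Countable (Σ n, Language.graph.Relations n) := by
  have : Function.Injective (fun x : Σ n, Language.graph.Relations n => x.1) := by
    rintro ⟨_, ⟨⟩⟩ ⟨_, ⟨⟩⟩ _; rfl
  exact this.countable

instance (α : Type) [Countable α] : Countable (Σ n, Language.graph.BoundedFormula α n) :=
  (Language.BoundedFormula.listEncode_sigma_injective).countable

instance (α : Type) [Countable α] : Countable (Language.graph.Formula α) := by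
  have : Function.Injective (fun φ : Language.graph.Formula α =>
      (⟨0, φ⟩ : Σ n, Language.graph.BoundedFormula α n)) :=
    fun a b h => by simpa using h
  exact this.countable

instance : Countable (Σ p : ℕ, Language.graph.Formula (Fin (p+1))) := by
  infer_instance

end Enumeration

end RAV

open RAV

/-- If `(Gₙ)` is an FO-convergent sequence of finite graphs with modeling
limit `L` and `r` is an algebraic vertex of `L`, then there are roots `rₙ ∈ V(Gₙ)` such that
`(Gₙ, rₙ)` FO-converges to `(L, r)`. -/
theorem rooting_algebraic_vertices
    (V : ℕ → Type) (fV : ∀ n, Fintype (V n)) (hVne : ∀ n, Nonempty (V n))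
    (G : ∀ n, SimpleGraph (V n))
    (W : Type) [MeasurableSpace W] [StandardBorelSpace W]
    (L : SimpleGraph W) (ν : Measure W) [IsProbabilityMeasure ν]
    (hmeas : ∀ (p : ℕ) (φ : Language.graph.Formula (Fin p)), MeasurableSet (solSet L φ))
    (hFOconv : ∀ (p : ℕ) (φ : Language.graph.Formula (Fin p)),
      ∃ c : ℝ, Tendsto (fun n => stoneG (fV n) (G n) φ) atTop (nhds c))
    (hlim : ∀ (p : ℕ) (φ : Language.graph.Formula (Fin p)),
      Tendsto (fun n => stoneG (fV n) (G n) φ) atTop (nhds (stoneL L ν φ)))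
    (r : W)
    (halg : ∃ ξ : Language.graph.Formula (Fin 1), (sol1 L ξ).Finite ∧ r ∈ sol1 L ξ) :
    ∃ rs : (n : ℕ) → V n,
      ∀ (p : ℕ) (φ : Language.graph.Formula (Fin (p + 1))),
        Tendsto (fun n => stoneGR (fV n) (G n) φ (rs n)) atTop
          (nhds (stoneLR L ν φ r)) := by
  classical
  obtain ⟨ξ, hfin, hr⟩ := halg
  have hev := eventually_card_eq V fV G L ν hlim ξ hfin hfin.toFinset.card rfl
  haveI : Nonempty (Σ p : ℕ, Language.graph.Formula (Fin (p+1))) :=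
    ⟨⟨0, BoundedFormula.falsum⟩⟩
  obtain ⟨enum, hsurj⟩ := exists_surjective_nat (Σ p : ℕ, Language.graph.Formula (Fin (p+1)))
  set c : ℕ → ℝ := fun j => stoneLR L ν (enum j).2 r with hc
  -- eventual good witnesses for finite prefixes
  have hpref : ∀ (m : ℕ) (ε : ℝ), 0 < ε → ∀ᶠ n in atTop, ∃ s ∈ sol1 (G n) ξ,
      ∀ j : ℕ, j < m → |stoneGR (fV n) (G n) (enum j).2 s - c j| < ε := by
    intro m ε hε
    have := core_eventually V fV G L ν hVne hmeas hlim ξ hfin hfin.toFinset.card rfl hev r hr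
      (fun j : Fin m => enum j) ε hε
    filter_upwards [this] with n hn
    obtain ⟨s, hs, hsj⟩ := hn
    exact ⟨s, hs, fun j hj => hsj ⟨j, hj⟩⟩
  -- penalty function and its argmin
  set pen : (n : ℕ) → V n → ℝ := fun n s =>
    ∑ j ∈ Finset.range (n+1),
      (1/2:ℝ)^j * min 1 |stoneGR (fV n) (G n) (enum j).2 s - c j| with hpen
  have hterm_nonneg : ∀ n s (j : ℕ),
      0 ≤ (1/2:ℝ)^j * min 1 |stoneGR (fV n) (G n) (enum j).2 s - c j| := by
    intro n s j
    exact mul_nonneg (by positivity) (le_min zero_le_one (abs_nonneg _))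
  have hpen_nonneg : ∀ n s, 0 ≤ pen n s := fun n s =>
    Finset.sum_nonneg (fun j _ => hterm_nonneg n s j)
  have hmin : ∀ n : ℕ, ∃ s : V n, ∀ t : V n, pen n s ≤ pen n t := by
    intro n
    haveI := hVne n
    obtain ⟨s, _, hs⟩ := Finset.exists_min_image Finset.univ (pen n)
      ⟨Classical.arbitrary (V n), Finset.mem_univ _⟩
    exact ⟨s, fun t => hs t (Finset.mem_univ t)⟩
  choose rs hrs using hmin
  refine ⟨rs, ?_⟩
  -- penalty of the chosen roots tends to 0
  have hpen0 : Tendsto (fun n => pen n (rs n)) atTop (nhds 0) := by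
    rw [NormedAddCommGroup.tendsto_nhds_zero]
    intro ε hε
    obtain ⟨Jt, hJt⟩ := exists_pow_lt_of_lt_one (show (0:ℝ) < ε/4 by positivity)
      (show (1/2:ℝ) < 1 by norm_num)
    have htolpos : (0:ℝ) < ε/(4*(Jt+1)) := by positivity
    filter_upwards [hpref Jt (ε/(4*(Jt+1))) htolpos] with n hn
    obtain ⟨s, _hs, hclose⟩ := hn
    have hbound : pen n s ≤ (Jt:ℝ)*(ε/(4*(Jt+1))) + (1/2:ℝ)^Jt * 2 := by
      have hsplit : pen n s
          = ∑ j ∈ Finset.range (n+1) ∩ Finset.range Jt,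
              (1/2:ℝ)^j * min 1 |stoneGR (fV n) (G n) (enum j).2 s - c j|
          + ∑ j ∈ Finset.range (n+1) \ Finset.range Jt,
              (1/2:ℝ)^j * min 1 |stoneGR (fV n) (G n) (enum j).2 s - c j| := by
        rw [hpen]
        exact (Finset.sum_inter_add_sum_sdiff _ _ _).symm
      rw [hsplit]
      have hb1 : ∑ j ∈ Finset.range (n+1) ∩ Finset.range Jt,
          (1/2:ℝ)^j * min 1 |stoneGR (fV n) (G n) (enum j).2 s - c j|
          ≤ (Jt:ℝ)*(ε/(4*(Jt+1))) := by
        have : ∀ j ∈ Finset.range (n+1) ∩ Finset.range Jt,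
            (1/2:ℝ)^j * min 1 |stoneGR (fV n) (G n) (enum j).2 s - c j| ≤ ε/(4*(Jt+1)) := by
          intro j hj
          have hjJt : j < Jt := Finset.mem_range.1 (Finset.mem_of_mem_inter_right hj)
          have h1 : min 1 |stoneGR (fV n) (G n) (enum j).2 s - c j| ≤ ε/(4*(Jt+1)) :=
            le_trans (min_le_right _ _) (le_of_lt (hclose j hjJt))
          calc (1/2:ℝ)^j * min 1 |stoneGR (fV n) (G n) (enum j).2 s - c j|
              ≤ 1 * min 1 |stoneGR (fV n) (G n) (enum j).2 s - c j| := by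
                apply mul_le_mul_of_nonneg_right _ (le_min zero_le_one (abs_nonneg _))
                exact pow_le_one₀ (by norm_num) (by norm_num)
            _ = min 1 |stoneGR (fV n) (G n) (enum j).2 s - c j| := one_mul _
            _ ≤ ε/(4*(Jt+1)) := h1
        calc ∑ j ∈ Finset.range (n+1) ∩ Finset.range Jt,
            (1/2:ℝ)^j * min 1 |stoneGR (fV n) (G n) (enum j).2 s - c j|
            ≤ ∑ _j ∈ Finset.range (n+1) ∩ Finset.range Jt, (ε/(4*(Jt+1))) :=
              Finset.sum_le_sum this
          _ = ((Finset.range (n+1) ∩ Finset.range Jt).card : ℝ) * (ε/(4*(Jt+1))) := by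
              rw [Finset.sum_const, nsmul_eq_mul]
          _ ≤ (Jt:ℝ)*(ε/(4*(Jt+1))) := by
              apply mul_le_mul_of_nonneg_right _ htolpos.le
              have : (Finset.range (n+1) ∩ Finset.range Jt).card ≤ Jt := by
                calc (Finset.range (n+1) ∩ Finset.range Jt).card
                    ≤ (Finset.range Jt).card :=
                      Finset.card_le_card (Finset.inter_subset_right)
                  _ = Jt := Finset.card_range Jt
              exact_mod_cast this
      have hb2 : ∑ j ∈ Finset.range (n+1) \ Finset.range Jt,
          (1/2:ℝ)^j * min 1 |stoneGR (fV n) (G n) (enum j).2 s - c j|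
          ≤ (1/2:ℝ)^Jt * 2 := by
        have hdiff : Finset.range (n+1) \ Finset.range Jt = Finset.Ico Jt (n+1) := by
          ext j
          simp only [Finset.mem_sdiff, Finset.mem_range, Finset.mem_Ico]
          omega
        calc ∑ j ∈ Finset.range (n+1) \ Finset.range Jt,
            (1/2:ℝ)^j * min 1 |stoneGR (fV n) (G n) (enum j).2 s - c j|
            ≤ ∑ j ∈ Finset.range (n+1) \ Finset.range Jt, (1/2:ℝ)^j := by
              apply Finset.sum_le_sum
              intro j _
              apply mul_le_of_le_one_right (by positivity)
              exact min_le_left _ _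
          _ = ∑ j ∈ Finset.Ico Jt (n+1), (1/2:ℝ)^j := by rw [hdiff]
          _ = ∑ j ∈ Finset.range (n+1-Jt), (1/2:ℝ)^(Jt+j) := by
              rw [Finset.sum_Ico_eq_sum_range]
          _ = (1/2:ℝ)^Jt * ∑ j ∈ Finset.range (n+1-Jt), (1/2:ℝ)^j := by
              rw [Finset.mul_sum]
              exact Finset.sum_congr rfl (fun j _ => pow_add _ _ _)
          _ ≤ (1/2:ℝ)^Jt * 2 := by
              apply mul_le_mul_of_nonneg_left _ (by positivity)
              exact sum_geometric_two_le _
      linarith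
    have hfinal : pen n (rs n) < ε := by
      have h1 : pen n (rs n) ≤ pen n s := hrs n s
      have h2 : (Jt:ℝ)*(ε/(4*(Jt+1))) ≤ ε/4 := by
        rw [mul_div_assoc']
        rw [div_le_div_iff₀ (by positivity) (by norm_num)]
        nlinarith [Nat.cast_nonneg (α := ℝ) Jt, hε]
      have h3 : (1/2:ℝ)^Jt * 2 < ε/2 := by nlinarith
      linarith
    rw [Real.norm_of_nonneg (hpen_nonneg n (rs n))]
    exact hfinal
  -- each coordinate converges
  have hcoord : ∀ j : ℕ, Tendsto (fun n => stoneGR (fV n) (G n) (enum j).2 (rs n))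
      atTop (nhds (c j)) := by
    intro j
    have hminconv : Tendsto (fun n => min 1 |stoneGR (fV n) (G n) (enum j).2 (rs n) - c j|)
        atTop (nhds 0) := by
      apply squeeze_zero' (Eventually.of_forall (fun n => le_min zero_le_one (abs_nonneg _)))
      · filter_upwards [eventually_ge_atTop j] with n hjn
        have hmem : j ∈ Finset.range (n+1) := Finset.mem_range.2 (by omega)
        have hterm := Finset.single_le_sum
          (fun i (_ : i ∈ Finset.range (n+1)) => hterm_nonneg n (rs n) i) hmem
        calc min 1 |stoneGR (fV n) (G n) (enum j).2 (rs n) - c j|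
            = (2:ℝ)^j * ((1/2:ℝ)^j * min 1 |stoneGR (fV n) (G n) (enum j).2 (rs n) - c j|) := by
              have h21 : (2:ℝ)^j * (1/2:ℝ)^j = 1 := by
                rw [← mul_pow]
                norm_num
              rw [← mul_assoc, h21, one_mul]
          _ ≤ (2:ℝ)^j * pen n (rs n) := by
              apply mul_le_mul_of_nonneg_left _ (by positivity)
              exact hterm
      · have := hpen0.const_mul ((2:ℝ)^j)
        rwa [mul_zero] at this
    have habs : Tendsto (fun n => |stoneGR (fV n) (G n) (enum j).2 (rs n) - c j|)
        atTop (nhds 0) := by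
      apply hminconv.congr'
      filter_upwards [hminconv.eventually (gt_mem_nhds one_pos)] with n hn
      have hlt : |stoneGR (fV n) (G n) (enum j).2 (rs n) - c j| < 1 := by
        by_contra hge
        push_neg at hge
        rw [min_eq_left hge] at hn
        exact absurd hn (lt_irrefl 1)
      rw [min_eq_right hlt.le]
    rw [tendsto_iff_dist_tendsto_zero]
    apply habs.congr
    intro n
    rw [Real.dist_eq]
  -- conclude
  intro p φ
  obtain ⟨j, hj⟩ := hsurj ⟨p, φ⟩
  have := hcoord j
  simp only [hc] at this
  rw [hj] at this
  exact this
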